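/- Let κ be a cardinal and let M = (κ, ∈, F, U) be a structure where U is interpreted as a proper initial segment of κ and F : κ → κ maps U cofinally into κ. Then M has no proper elementary end extension: if N is an elementary extension of M such that M is an initial segment of N and N ≠ M, a contradiction follows. -/

import Mathlib

open FirstOrder Language Structure Cardinal

/-- The language `{<, F, U}`: one unary function `F`, one unary relation `U`, and one
binary relation `<`. -/
def LFU : FirstOrder.Language where
  Functions := fun n => match n with | 1 => PUnit | _ => PEmpty
  Relations := fun n => match n with | 1 => PUnit | 2 => PUnit | _ => PEmpty

/-- The function symbol `F`. -/
def LFU.Fsym : LFU.Functions 1 := PUnit.unit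

/-- The relation symbol `U`. -/
def LFU.Usym : LFU.Relations 1 := PUnit.unit

/-- The relation symbol `<`. -/
def LFU.ltsym : LFU.Relations 2 := PUnit.unit

/-- Interpretation of `<` in an `LFU`-structure. -/
def ltS {M : Type} [LFU.Structure M] (a b : M) : Prop :=
  Structure.RelMap LFU.ltsym ![a, b]

/-- Interpretation of `U` in an `LFU`-structure. -/
def US {M : Type} [LFU.Structure M] (a : M) : Prop :=
  Structure.RelMap LFU.Usym ![a]

/-- Interpretation of `F` in an `LFU`-structure. -/
def FS {M : Type} [LFU.Structure M] (a : M) : M :=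
  Structure.funMap LFU.Fsym ![a]

/-- Let `κ` be a cardinal and `M = (κ, ∈, F, U)` a structure where `<` is interpreted
as the order of `κ`, `U` as a proper initial segment, and `F` maps `U` cofinally into
`κ`.  Then `M` has no proper elementary end extension: any elementary embedding
`g : M ↪ₑ N` with all elements outside its range above all of its range is surjective. -/

theorem vec_one {α : Type*} (x : α) : (fun _ : Fin 1 => x) = ![x] := by
  funext i; fin_cases i; rfl

/-- The sentence `∀ a ∃ u, U u ∧ a < F u`. -/
def cofS : LFU.Sentence :=
  ∀' ∃' ((LFU.Usym.boundedFormula₁ (&1)) ⊓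
    (LFU.ltsym.boundedFormula₂ (&0) (Term.func LFU.Fsym ![&1])))

/-- The sentence `∀ x y, x < y → ¬ y < x`. -/
def asymS : LFU.Sentence :=
  ∀' ∀' ((LFU.ltsym.boundedFormula₂ (&0) (&1)) ⟹ ∼(LFU.ltsym.boundedFormula₂ (&1) (&0)))

/-- The formula `∀ u, U u → u < x`. -/
def bdF : LFU.Formula (Fin 1) :=
  ∀' ((LFU.Usym.boundedFormula₁ (&0)) ⟹
    (LFU.ltsym.boundedFormula₂ (&0) (Term.var (Sum.inl 0))))

theorem cofS_iff {M : Type} [LFU.Structure M] :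
    (M ⊨ cofS) ↔ ∀ a : M, ∃ u : M, US u ∧ ltS a (FS u) := by
  simp [cofS, Sentence.Realize, Formula.Realize, US, ltS, FS, Fin.snoc, vec_one]

theorem asymS_iff {M : Type} [LFU.Structure M] :
    (M ⊨ asymS) ↔ ∀ a b : M, ltS a b → ¬ ltS b a := by
  simp [asymS, Sentence.Realize, Formula.Realize, ltS, Fin.snoc]

theorem bdF_iff {M : Type} [LFU.Structure M] (x : M) :
    (bdF.Realize (fun _ => x)) ↔ ∀ u : M, US u → ltS u x := by
  simp [bdF, Formula.Realize, US, ltS, Fin.snoc]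

theorem stmt15 (κ : Cardinal) [LFU.Structure κ.ord.ToType]
    (hlt : ∀ a b : κ.ord.ToType, ltS a b ↔ a < b)
    (hUinit : ∀ u v : κ.ord.ToType, US u → ltS v u → US v)
    (hUproper : ∃ a : κ.ord.ToType, ¬ US a)
    (hFcof : ∀ a : κ.ord.ToType, ∃ u : κ.ord.ToType, US u ∧ ltS a (FS u))
    (N : Type) [LFU.Structure N] (g : κ.ord.ToType ↪ₑ[LFU] N)
    (hend : ∀ b : N, b ∉ Set.range g → ∀ a : κ.ord.ToType, ltS (g a) b) :
    Function.Surjective g := by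
  intro b
  by_contra hb
  have hbmem : b ∉ Set.range g := by
    rintro ⟨a, rfl⟩; exact hb ⟨a, rfl⟩
  obtain ⟨a0, ha0⟩ := hUproper
  -- asymmetry in N
  have hasymM : ∀ a b : κ.ord.ToType, ltS a b → ¬ ltS b a := by
    intro x y hxy hyx
    rw [hlt] at hxy hyx
    exact lt_asymm hxy hyx
  have hasymN : ∀ a b : N, ltS a b → ¬ ltS b a :=
    asymS_iff.mp ((g.map_sentence asymS).mp (asymS_iff.mpr hasymM))
  -- cofinality in N
  have hcofN : ∀ a : N, ∃ u : N, US u ∧ ltS a (FS u) :=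
    cofS_iff.mp ((g.map_sentence cofS).mp (cofS_iff.mpr hFcof))
  -- boundedness of U by a0, transferred to N
  have hbdM : ∀ u : κ.ord.ToType, US u → ltS u a0 := by
    intro u hu
    rw [hlt]
    rcases lt_trichotomy u a0 with h | h | h
    · exact h
    · exact absurd (h ▸ hu) ha0
    · exact absurd (hUinit u a0 hu ((hlt _ _).mpr h)) ha0
  have hbdN : ∀ u : N, US u → ltS u (g a0) := by
    have h1 := (g.map_formula bdF (fun _ => a0)).mpr ((bdF_iff a0).mpr hbdM)
    have h2 : (g ∘ fun _ => a0) = fun _ : Fin 1 => g a0 := rfl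
    rw [h2] at h1
    exact (bdF_iff (g a0)).mp h1
  obtain ⟨u, hu, hbu⟩ := hcofN b
  -- u must be in the range of g
  have hur : u ∈ Set.range g := by
    by_contra hur
    exact hasymN _ _ (hbdN u hu) (hend u hur a0)
  obtain ⟨u', rfl⟩ := hur
  -- F commutes with g
  have hF : FS (g u') = g (FS u') := by
    have := g.map_fun LFU.Fsym ![u']
    have h2 : (g ∘ ![u']) = ![g u'] := by
      funext i; fin_cases i <;> rfl
    rw [h2] at this
    exact this.symm
  rw [hF] at hbu
  exact hasymN _ _ hbu (hend b hbmem (FS u'))
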